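/- There exist an irreducible almost upper triangular transition matrix U on ℕ and a bounded function R : ℕ → ℝ with R a > 0 for every a and R not constant, such that for every a the series ∑_j U a j · R j converges with sum R a. In particular, some irreducible almost upper triangular transition matrices have several positive, non-proportional right eigenvectors associated with the eigenvalue 1 (R and the constant vector 1). -/

import Mathlib

open Relation

/-- Irreducibility of a matrix on `ℕ`. -/
def MatIrreducible (M : ℕ → ℕ → ℝ) : Prop :=
  ∀ i j : ℕ, ∃ (n : ℕ) (x : ℕ → ℕ), 0 < n ∧ x 0 = i ∧ x n = j ∧
    ∀ k, k < n → 0 < M (x k) (x (k + 1))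

noncomputable def sk (k : ℕ) : ℝ := (1/2) ^ (k+1)

lemma sk_pos (k : ℕ) : 0 < sk k := pow_pos (by norm_num) _

lemma sk_le_half (k : ℕ) : sk k ≤ 1/2 := by
  have h := pow_le_pow_of_le_one (by norm_num : (0:ℝ) ≤ 1/2) (by norm_num)
    (show 1 ≤ k+1 by omega)
  simpa [sk] using h

lemma sk_le_quarter (k : ℕ) (hk : 1 ≤ k) : sk k ≤ 1/4 := by
  have h := pow_le_pow_of_le_one (by norm_num : (0:ℝ) ≤ 1/2) (by norm_num)
    (show 2 ≤ k+1 by omega)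
  calc sk k ≤ (1/2 : ℝ)^2 := by simpa [sk] using h
  _ = 1/4 := by norm_num

lemma sk_succ (k : ℕ) : sk (k+1) = sk k / 2 := by
  simp only [sk, pow_succ]; ring

def tgt1 (i : ℕ) : ℕ := if i = 0 then 2 else i - 1
def tgt2 (i : ℕ) : ℕ := if i ≤ 1 then 3 else i + 2

noncomputable def w1 (i : ℕ) : ℝ :=
  if i = 0 then 1/2 else if i = 1 then 1 else
  if i % 2 = 0 then sk (i/2) / (2 - 5 * sk (i/2)) else sk (i/2) / (2 - 3 * sk (i/2))

noncomputable def Umat (i j : ℕ) : ℝ :=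
  (if j = tgt1 i then w1 i else 0) + (if j = tgt2 i then 1 - w1 i else 0)

noncomputable def Rvec (i : ℕ) : ℝ :=
  if i % 2 = 0 then 1 + sk (i/2) else 2 - sk (i/2)

lemma tgt_ne (i : ℕ) : tgt1 i ≠ tgt2 i := by
  simp only [tgt1, tgt2]; split_ifs <;> omega

lemma quarter_facts {i : ℕ} (hi : 2 ≤ i) : 0 < sk (i/2) ∧ sk (i/2) ≤ 1/4 :=
  ⟨sk_pos _, sk_le_quarter _ (by omega)⟩

lemma w1_nonneg (i : ℕ) : 0 ≤ w1 i := by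
  unfold w1
  split_ifs with h0 h1 h2
  · norm_num
  · norm_num
  · have hq := quarter_facts (i := i) (by omega)
    apply div_nonneg (le_of_lt hq.1); linarith [hq.2]
  · have hq := quarter_facts (i := i) (by omega)
    apply div_nonneg (le_of_lt hq.1); linarith [hq.2]

lemma w1_pos (i : ℕ) (hi : 1 ≤ i) : 0 < w1 i := by
  unfold w1
  split_ifs with h0 h1 h2
  · omega
  · norm_num
  · have hq := quarter_facts (i := i) (by omega)
    apply div_pos hq.1; linarith [hq.2]
  · have hq := quarter_facts (i := i) (by omega)
    apply div_pos hq.1; linarith [hq.2]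

lemma w1_le_one (i : ℕ) : w1 i ≤ 1 := by
  unfold w1
  split_ifs with h0 h1 h2
  · norm_num
  · norm_num
  · have hq := quarter_facts (i := i) (by omega)
    rw [div_le_one (by linarith [hq.2])]; linarith [hq.2]
  · have hq := quarter_facts (i := i) (by omega)
    rw [div_le_one (by linarith [hq.2])]; linarith [hq.2]

lemma w1_lt_one (i : ℕ) (hi : 2 ≤ i) : w1 i < 1 := by
  unfold w1
  split_ifs with h0 h1 h2
  · omega
  · omega
  · have hq := quarter_facts (i := i) hi
    rw [div_lt_one (by linarith [hq.2])]; linarith [hq.2]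
  · have hq := quarter_facts (i := i) hi
    rw [div_lt_one (by linarith [hq.2])]; linarith [hq.2]

lemma Rvec_even (k : ℕ) : Rvec (2*k) = 1 + sk k := by
  have h1 : (2*k) % 2 = 0 := by omega
  have h2 : (2*k) / 2 = k := by omega
  simp [Rvec, h1, h2]

lemma Rvec_odd (k : ℕ) : Rvec (2*k+1) = 2 - sk k := by
  have h1 : (2*k+1) % 2 = 1 := by omega
  have h2 : (2*k+1) / 2 = k := by omega
  simp [Rvec, h1, h2]

lemma harm (i : ℕ) : w1 i * Rvec (tgt1 i) + (1 - w1 i) * Rvec (tgt2 i) = Rvec i := by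
  rcases Nat.lt_or_ge i 2 with hi | hi
  · interval_cases i <;> norm_num [w1, tgt1, tgt2, Rvec, sk]
  · have ht1 : tgt1 i = i - 1 := by simp [tgt1]; omega
    have ht2 : tgt2 i = i + 2 := by simp [tgt2]; omega
    rcases Nat.even_or_odd i with ⟨k, hk⟩ | ⟨k, hk⟩
    · -- i = 2k, k ≥ 1
      have hk1 : 1 ≤ k := by omega
      obtain ⟨m, rfl⟩ : ∃ m, k = m + 1 := ⟨k - 1, by omega⟩
      have hi' : i = 2*(m+1) := by omega
      subst hi'
      have e1 : 2*(m+1) - 1 = 2*m + 1 := by omega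
      have e2 : 2*(m+1) + 2 = 2*(m+2) := by omega
      have hw : w1 (2*(m+1)) = sk (m+1) / (2 - 5 * sk (m+1)) := by
        have h0 : ¬ (2*(m+1) = 0) := by omega
        have h1 : ¬ (2*(m+1) = 1) := by omega
        have h2 : (2*(m+1)) % 2 = 0 := by omega
        have h3 : (2*(m+1)) / 2 = m + 1 := by omega
        simp [w1, h0, h1, h2, h3]
      rw [ht1, ht2, e1, e2, hw]
      simp only [Rvec_even, Rvec_odd]
      have hs1 : sk m = 2 * sk (m+1) := by rw [sk_succ]; ring
      have hs2 : sk (m+2) = sk (m+1) / 2 := sk_succ (m+1)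
      rw [hs1, hs2]
      set t := sk (m+1) with htdef
      have htpos : 0 < t := sk_pos _
      have htq : t ≤ 1/4 := sk_le_quarter _ (by omega)
      have hden : (2 - 5 * t) ≠ 0 := by linarith
      have hu : (2 - 5 * t)⁻¹ * (2 - 5 * t) = 1 := inv_mul_cancel₀ hden
      simp only [div_eq_mul_inv]
      generalize (2 - 5 * t)⁻¹ = u at hu ⊢
      linear_combination (t/2) * hu
    · -- i = 2k+1, k ≥ 1
      have hk1 : 1 ≤ k := by omega
      obtain ⟨m, rfl⟩ : ∃ m, k = m + 1 := ⟨k - 1, by omega⟩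
      have hi' : i = 2*(m+1)+1 := by omega
      subst hi'
      have e1 : 2*(m+1) + 1 - 1 = 2*(m+1) := by omega
      have e2 : 2*(m+1) + 1 + 2 = 2*(m+2) + 1 := by omega
      have hw : w1 (2*(m+1)+1) = sk (m+1) / (2 - 3 * sk (m+1)) := by
        have h0 : ¬ (2*(m+1)+1 = 0) := by omega
        have h1 : ¬ (2*(m+1)+1 = 1) := by omega
        have h2 : ¬ ((2*(m+1)+1) % 2 = 0) := by omega
        have h3 : (2*(m+1)+1) / 2 = m + 1 := by omega
        simp [w1, h0, h1, h2, h3]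
      rw [ht1, ht2, e1, e2, hw]
      simp only [Rvec_even, Rvec_odd]
      have hs2 : sk (m+2) = sk (m+1) / 2 := sk_succ (m+1)
      rw [hs2]
      set t := sk (m+1) with htdef
      have htpos : 0 < t := sk_pos _
      have htq : t ≤ 1/4 := sk_le_quarter _ (by omega)
      have hden : (2 - 3 * t) ≠ 0 := by linarith
      have hu : (2 - 3 * t)⁻¹ * (2 - 3 * t) = 1 := inv_mul_cancel₀ hden
      simp only [div_eq_mul_inv]
      generalize (2 - 3 * t)⁻¹ = u at hu ⊢
      linear_combination (-t/2) * hu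

lemma rowSum (i : ℕ) : HasSum (fun j => Umat i j) 1 := by
  have h1 := hasSum_ite_eq (tgt1 i) (w1 i)
  have h2 := hasSum_ite_eq (tgt2 i) (1 - w1 i)
  have h := h1.add h2
  rw [show w1 i + (1 - w1 i) = 1 by ring] at h
  exact h

lemma eigen (i : ℕ) : HasSum (fun j => Umat i j * Rvec j) (Rvec i) := by
  have h1 := hasSum_ite_eq (tgt1 i) (w1 i * Rvec (tgt1 i))
  have h2 := hasSum_ite_eq (tgt2 i) ((1 - w1 i) * Rvec (tgt2 i))
  have h := h1.add h2
  rw [harm i] at h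
  have hfun : (fun j => Umat i j * Rvec j) =
      fun j => (if j = tgt1 i then w1 i * Rvec (tgt1 i) else 0) +
        (if j = tgt2 i then (1 - w1 i) * Rvec (tgt2 i) else 0) := by
    funext j
    simp only [Umat]
    split_ifs with ha hb hb
    · exact ((tgt_ne i) (ha.symm.trans hb)).elim
    · subst ha; ring
    · subst hb; ring
    · ring
  rw [hfun]
  exact h

lemma Umat_nonneg (i j : ℕ) : 0 ≤ Umat i j := by
  unfold Umat
  have h1 := w1_nonneg i
  have h2 := w1_le_one i
  apply add_nonneg <;> split_ifs <;> linarith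

lemma Umat_aut (i j : ℕ) (h : j + 1 < i) : Umat i j = 0 := by
  have h1 : j ≠ tgt1 i := by simp only [tgt1]; split_ifs <;> omega
  have h2 : j ≠ tgt2 i := by simp only [tgt2]; split_ifs <;> omega
  unfold Umat
  rw [if_neg h1, if_neg h2, add_zero]

lemma hdown (i : ℕ) : 0 < Umat (i+1) i := by
  have h1 : i = tgt1 (i+1) := by simp [tgt1]
  have h2 : i ≠ tgt2 (i+1) := by simp only [tgt2]; split_ifs <;> omega
  unfold Umat
  rw [if_pos h1, if_neg h2, add_zero]
  exact w1_pos _ (by omega)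

lemma hup2 (i : ℕ) (h : 2 ≤ i) : 0 < Umat i (i+2) := by
  have h1 : i + 2 ≠ tgt1 i := by simp only [tgt1]; split_ifs <;> omega
  have h2 : i + 2 = tgt2 i := by simp only [tgt2]; split_ifs <;> omega
  unfold Umat
  rw [if_neg h1, if_pos h2, zero_add]
  have := w1_lt_one i h
  linarith

lemma h02 : 0 < Umat 0 2 := by norm_num [Umat, tgt1, tgt2, w1]

lemma h10 : 0 < Umat 1 0 := by norm_num [Umat, tgt1, tgt2, w1]

lemma tg_up1 (i : ℕ) : TransGen (fun a b => 0 < Umat a b) i (i+1) := by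
  match i with
  | 0 => exact TransGen.head h02 (TransGen.single (hdown 1))
  | 1 => exact TransGen.head h10 (TransGen.single h02)
  | (n+2) =>
    exact TransGen.head (hup2 (n+2) (by omega)) (TransGen.single (hdown (n+3)))

lemma tg_down1 (i : ℕ) : TransGen (fun a b => 0 < Umat a b) (i+1) i :=
  TransGen.single (hdown i)

lemma tg_downN : ∀ d i, TransGen (fun a b => 0 < Umat a b) (i+d+1) i := by
  intro d
  induction d with
  | zero => exact fun i => tg_down1 i
  | succ d ih =>
    intro i
    exact TransGen.head (hdown (i+d+1)) (ih i)

lemma tg_upN : ∀ d i, TransGen (fun a b => 0 < Umat a b) i (i+d+1) := by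
  intro d
  induction d with
  | zero => exact fun i => tg_up1 i
  | succ d ih =>
    intro i
    exact (ih i).trans (tg_up1 (i+d+1))

lemma tg_all (i j : ℕ) : TransGen (fun a b => 0 < Umat a b) i j := by
  rcases lt_trichotomy i j with h | h | h
  · obtain ⟨d, rfl⟩ : ∃ d, j = i + d + 1 := ⟨j - i - 1, by omega⟩
    exact tg_upN d i
  · subst h
    exact (tg_up1 i).trans (tg_down1 i)
  · obtain ⟨d, rfl⟩ : ∃ d, i = j + d + 1 := ⟨i - j - 1, by omega⟩
    exact tg_downN d j

lemma tg_to_path {i j : ℕ} (h : TransGen (fun a b => 0 < Umat a b) i j) :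
    ∃ (n : ℕ) (x : ℕ → ℕ), 0 < n ∧ x 0 = i ∧ x n = j ∧
      ∀ k, k < n → 0 < Umat (x k) (x (k + 1)) := by
  induction h with
  | single h' =>
    rename_i b
    refine ⟨1, fun p => if p = 0 then i else b, one_pos, by simp, by simp, ?_⟩
    intro k hk
    interval_cases k
    simpa using h'
  | tail hab hbc ih =>
    rename_i b c
    obtain ⟨n, x, hn, h0, hxn, hstep⟩ := ih
    refine ⟨n+1, fun p => if p ≤ n then x p else c, by omega, ?_, ?_, ?_⟩
    · simp [h0]
    · simp
    · intro k hk
      rcases Nat.lt_or_ge k n with hkn | hkn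
      · have e1 : k ≤ n := by omega
        have e2 : k + 1 ≤ n := by omega
        simp only [if_pos e1, if_pos e2]
        exact hstep k hkn
      · have hk' : k = n := by omega
        have e1 : k ≤ n := by omega
        have e2 : ¬ (k + 1 ≤ n) := by omega
        simp only [if_pos e1, if_neg e2]
        have hxb : x k = b := by rw [hk']; exact hxn
        rw [hxb]
        exact hbc

theorem exists_aut_with_nonconstant_positive_right_eigenvector :
    ∃ (U : ℕ → ℕ → ℝ) (R : ℕ → ℝ),
      (∀ i j, 0 ≤ U i j) ∧
      (∀ i, HasSum (fun j => U i j) 1) ∧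
      (∀ i j, j + 1 < i → U i j = 0) ∧
      MatIrreducible U ∧
      (∃ C : ℝ, ∀ a, |R a| ≤ C) ∧
      (∀ a, 0 < R a) ∧
      (∃ a b, R a ≠ R b) ∧
      (∀ a, HasSum (fun j => U a j * R j) (R a)) := by
  refine ⟨Umat, Rvec, Umat_nonneg, rowSum, Umat_aut, ?_, ⟨2, ?_⟩, ?_, ⟨0, 2, ?_⟩, eigen⟩
  · intro i j
    exact tg_to_path (tg_all i j)
  · intro a
    have h1 := sk_pos (a/2)
    have h2 := sk_le_half (a/2)
    rw [abs_le]
    unfold Rvec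
    constructor <;> split_ifs <;> linarith
  · intro a
    have h1 := sk_pos (a/2)
    have h2 := sk_le_half (a/2)
    unfold Rvec
    split_ifs <;> linarith
  · norm_num [Rvec, sk]
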